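/- Consider the X3C-reduction house allocation instance constructed from an Exact 3-Set Cover instance. If there exist k = N/3 subsets S_{p_1}, ..., S_{p_k} among S_1, ..., S_M whose union is the entire universe V, then this instance admits a proportional assignment. -/

import Mathlib

/-- Utility function of the X3C-reduction instance: the universe is `Fin N`,
the `M` size-3 subsets are given by their ordered elements `e j 0, e j 1, e j 2`.
With `T = 100 * (M + N)` and `C = 8 * T + 8 * N - 19`, the agents are
`Fin N ⊕ Fin T` (`Sum.inl i` is `a_i`, `Sum.inr i` is `a*_i`) and the houses are
`(Fin M × Fin 3) ⊕ Fin T` (`Sum.inl (j, ℓ)` is `h^ℓ_j`, `Sum.inr j` is `h*_j`). -/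
def xUtil (N M : ℕ) (e : Fin M → Fin 3 → Fin N) :
    Fin N ⊕ Fin (100 * (M + N)) → (Fin M × Fin 3) ⊕ Fin (100 * (M + N)) → ℕ
  | Sum.inl i, Sum.inl (j, ℓ) =>
      if e j ℓ = i then 8 * (100 * (M + N))
      else if e j (ℓ + 1) = i then 6 * (100 * (M + N)) - (j.val + 1)
      else if e j (ℓ + 2) = i then 5 * (100 * (M + N)) + (j.val + 1)
      else 0
  | Sum.inl _, Sum.inr _ => 8 * (100 * (M + N)) + 8 * N - 19
  | Sum.inr _, Sum.inl _ => 0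
  | Sum.inr _, Sum.inr _ => 1

/-- Agent `a` is proportional in assignment `φ`: her utility for her own house
is at least `1/n` times her total utility for all assigned houses. -/
def propAgent {A H : Type*} [Fintype A] (u : A → H → ℕ) (φ : A → H) (a : A) : Prop :=
  ((u a (φ a) : ℝ)) ≥ (1 / (Fintype.card A : ℝ)) * ∑ a' : A, (u a (φ a') : ℝ)

/-- If `N/3` of the subsets cover the whole universe, then the X3C-reduction
instance admits a proportional assignment. -/
theorem x3c_to_proportional (N M : ℕ) (hN : 3 ∣ N)
    (e : Fin M → Fin 3 → Fin N) (hinj : ∀ j, Function.Injective (e j))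
    (hcov : ∃ P : Finset (Fin M), P.card = N / 3 ∧
      ∀ i : Fin N, ∃ j ∈ P, ∃ ℓ : Fin 3, e j ℓ = i) :
    ∃ φ : Fin N ⊕ Fin (100 * (M + N)) → (Fin M × Fin 3) ⊕ Fin (100 * (M + N)),
      Function.Injective φ ∧ ∀ a, propAgent (xUtil N M e) φ a := by
  obtain ⟨P, hPcard, hPcov⟩ := hcov
  set T := 100 * (M + N) with hT
  have hcard : Fintype.card (↥P × Fin 3) = Fintype.card (Fin N) := by
    simp [hPcard, Nat.div_mul_cancel hN]
  set f : ↥P × Fin 3 → Fin N := fun p => e p.1 p.2 with hf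
  have hsurj : Function.Surjective f := by
    intro i
    obtain ⟨j, hj, ℓ, hℓ⟩ := hPcov i
    exact ⟨(⟨j, hj⟩, ℓ), hℓ⟩
  have hbij : Function.Bijective f :=
    (Fintype.bijective_iff_surjective_and_card f).2 ⟨hsurj, hcard⟩
  set σ : Fin N ≃ ↥P × Fin 3 := (Equiv.ofBijective f hbij).symm with hσdef
  have hσ : ∀ i, e (σ i).1 (σ i).2 = i := fun i =>
    (Equiv.ofBijective f hbij).apply_symm_apply i
  have hfσ : ∀ i, f (σ i) = i := hσ
  refine ⟨fun a => match a with
    | Sum.inl i => Sum.inl ((σ i).1.1, (σ i).2)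
    | Sum.inr k => Sum.inr k, ?_, ?_⟩
  · intro a b hab
    match a, b with
    | Sum.inl i, Sum.inl i' =>
      simp only [Sum.inl.injEq, Prod.mk.injEq] at hab
      have : σ i = σ i' := Prod.ext (Subtype.ext hab.1) hab.2
      simpa using σ.injective this
    | Sum.inr k, Sum.inr k' => simpa using hab
    | Sum.inl i, Sum.inr k => simp at hab
    | Sum.inr k, Sum.inl i => simp at hab
  · intro a
    have hcardA : (Fintype.card (Fin N ⊕ Fin T) : ℝ) = N + T := by simp
    match a with
    | Sum.inr k =>
      unfold propAgent
      rw [hcardA, Fintype.sum_sum_type]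
      simp only [xUtil, Nat.cast_zero, Nat.cast_one, Finset.sum_const, Finset.card_univ,
        Fintype.card_fin, nsmul_eq_mul, mul_one, mul_zero, Finset.sum_const_zero, zero_add]
      rw [ge_iff_le, one_div, ← div_eq_inv_mul]
      apply div_le_one_of_le₀
      · push_cast [hT]; linarith
      · positivity
    | Sum.inl i =>
      have hN1 : 0 < N := i.pos
      have hM1 : 0 < M := (σ i).1.1.pos
      have hT3 : 19 ≤ T := by omega
      unfold propAgent
      rw [hcardA, Fintype.sum_sum_type]
      -- star sum
      have hstar : ∑ k : Fin T, ((xUtil N M e (Sum.inl i) (Sum.inr k) : ℕ) : ℝ)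
          = T * (8 * T + 8 * N - 19 : ℝ) := by
        have h1 : ∀ k : Fin T, ((xUtil N M e (Sum.inl i) (Sum.inr k) : ℕ) : ℝ)
            = (8 * T + 8 * N - 19 : ℝ) := by
          intro k
          show ((8 * T + 8 * N - 19 : ℕ) : ℝ) = _
          rw [Nat.cast_sub (by omega)]
          push_cast; ring
        rw [Finset.sum_congr rfl (fun k _ => h1 k)]
        simp [mul_comm]
        ring
      -- element sum
      have helem : ∑ i' : Fin N,
          ((xUtil N M e (Sum.inl i) (Sum.inl ((σ i').1.1, (σ i').2)) : ℕ) : ℝ)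
          = 19 * T := by
        rw [Fintype.sum_equiv σ _ (fun p : ↥P × Fin 3 =>
          ((xUtil N M e (Sum.inl i) (Sum.inl (p.1.1, p.2)) : ℕ) : ℝ)) (fun i' => rfl)]
        rw [Fintype.sum_prod_type]
        rw [Finset.sum_eq_single (σ i).1]
        · -- sum over ℓ for own subset
          rcases hq : σ i with ⟨⟨j, hjP⟩, ℓ₀⟩
          have hown : e j ℓ₀ = i := by have := hσ i; rw [hq] at this; exact this
          have hne : ∀ ℓ : Fin 3, ℓ ≠ ℓ₀ → e j ℓ ≠ i := by
            intro ℓ hℓ hcon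
            exact hℓ (hinj j (hcon.trans hown.symm))
          have hjM : j.val < M := j.isLt
          have hsub : ((6 * (100 * (M + N)) - (j.val + 1) : ℕ) : ℝ)
              = 6 * (100 * (M + N) : ℕ) - (j.val + 1) := by
            rw [Nat.cast_sub (by omega)]; push_cast; ring
          rw [Fin.sum_univ_three]
          fin_cases ℓ₀
          · simp only [xUtil, hown, hne 1 (by decide), hne 2 (by decide), if_true, if_false,
              show ((0:Fin 3)+1) = 1 from rfl, show ((0:Fin 3)+2) = 2 from rfl,
              show ((1:Fin 3)+1) = 2 from rfl, show ((1:Fin 3)+2) = 0 from rfl,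
              show ((2:Fin 3)+1) = 0 from rfl, show ((2:Fin 3)+2) = 1 from rfl]
            simp only [show e j 0 = i from hown, eq_self_iff_true, if_true, hsub]
            push_cast [hT]; ring
          · simp only [xUtil, hown, hne 0 (by decide), hne 2 (by decide), if_true, if_false,
              show ((0:Fin 3)+1) = 1 from rfl, show ((0:Fin 3)+2) = 2 from rfl,
              show ((1:Fin 3)+1) = 2 from rfl, show ((1:Fin 3)+2) = 0 from rfl,
              show ((2:Fin 3)+1) = 0 from rfl, show ((2:Fin 3)+2) = 1 from rfl]
            simp only [show e j 1 = i from hown, eq_self_iff_true, if_true, hsub]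
            push_cast [hT]; ring
          · simp only [xUtil, hown, hne 0 (by decide), hne 1 (by decide), if_true, if_false,
              show ((0:Fin 3)+1) = 1 from rfl, show ((0:Fin 3)+2) = 2 from rfl,
              show ((1:Fin 3)+1) = 2 from rfl, show ((1:Fin 3)+2) = 0 from rfl,
              show ((2:Fin 3)+1) = 0 from rfl, show ((2:Fin 3)+2) = 1 from rfl]
            simp only [show e j 2 = i from hown, eq_self_iff_true, if_true, hsub]
            push_cast [hT]; ring
        · intro j _ hjne
          have hne : ∀ ℓ : Fin 3, e j.1 ℓ ≠ i := by
            intro ℓ hcon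
            have h2 : f (j, ℓ) = f (σ i) := by rw [hfσ i]; exact hcon
            have h3 : (j, ℓ) = σ i := hbij.1 h2
            exact hjne (congrArg Prod.fst h3)
          simp [xUtil, hne]
        · intro h; exact absurd (Finset.mem_univ _) h
      rw [hstar, helem]
      have hown : ((xUtil N M e (Sum.inl i) (Sum.inl ((σ i).1.1, (σ i).2)) : ℕ) : ℝ)
          = 8 * T := by
        have h4 : xUtil N M e (Sum.inl i) (Sum.inl ((σ i).1.1, (σ i).2)) = 8 * T := by
          simp [xUtil, hσ i]
          exact hT.symm
        rw [h4]; push_cast; ring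
      rw [hown]
      rw [ge_iff_le, one_div, ← div_eq_inv_mul, div_le_iff₀ (by positivity)]
      nlinarith [hT3, hN1, (by exact_mod_cast Nat.cast_le.mpr hT3 : (19:ℝ) ≤ T),
        (by exact_mod_cast Nat.cast_le.mpr hN1 : (1:ℝ) ≤ N)]
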